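/- For every positive integer k, the star K_{1,2k−1} is not proportionally k-choosable. -/
import Mathlib


open Finset

/-- The multiplicity of a color `c` in a list assignment `L`: the number of
vertices whose list contains `c`. -/
def eta {V : Type*} [Fintype V] (L : V → Finset ℕ) (c : ℕ) : ℕ :=
  (Finset.univ.filter fun v => c ∈ L v).card

/-- `f` is a proportional `L`-coloring of `G` (with lists of size `k`): a proper
`L`-coloring in which each color `c` of the palette is used `⌊η(c)/k⌋` or `⌈η(c)/k⌉` times. -/
def IsProportionalColoring {V : Type*} [Fintype V] (G : SimpleGraph V) (k : ℕ)
    (L : V → Finset ℕ) (f : V → ℕ) : Prop :=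
  (∀ v, f v ∈ L v) ∧ (∀ u v, G.Adj u v → f u ≠ f v) ∧
  ∀ c, (∃ v, c ∈ L v) →
    (Finset.univ.filter fun v => f v = c).card = eta L c / k ∨
    (Finset.univ.filter fun v => f v = c).card = (eta L c + k - 1) / k

/-- `G` is proportionally `k`-choosable: every `k`-assignment admits a proportional coloring. -/
def ProportionallyChoosable {V : Type*} [Fintype V] (G : SimpleGraph V) (k : ℕ) : Prop :=
  ∀ L : V → Finset ℕ, (∀ v, (L v).card = k) → ∃ f : V → ℕ, IsProportionalColoring G k L f

theorem stmt_9 (k : ℕ) (hk : 0 < k) :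
    ¬ ProportionallyChoosable (completeBipartiteGraph (Fin 1) (Fin (2 * k - 1))) k := by
  intro h
  obtain ⟨f, hf, hadj, hcount⟩ := h (fun _ => Finset.range k) (fun _ => Finset.card_range k)
  set c := f (Sum.inl 0) with hc
  have hcmem : c ∈ Finset.range k := hf _
  have heta : eta (fun _ : Fin 1 ⊕ Fin (2 * k - 1) => Finset.range k) c = 2 * k := by
    unfold eta
    rw [Finset.filter_true_of_mem (fun v _ => hcmem), Finset.card_univ]
    simp [Fintype.card_sum]
    omega
  have hsub : (Finset.univ.filter fun v => f v = c) ⊆ {Sum.inl 0} := by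
    intro v hv
    simp only [Finset.mem_filter, Finset.mem_univ, true_and] at hv
    simp only [Finset.mem_singleton]
    match v with
    | Sum.inl a => exact congrArg Sum.inl (Subsingleton.elim a 0)
    | Sum.inr b => exact absurd hv.symm (hadj (Sum.inl 0) (Sum.inr b) (by simp))
  have hle : (Finset.univ.filter fun v => f v = c).card ≤ 1 := by
    simpa using Finset.card_le_card hsub
  have h2 : (2 * k) / k = 2 := by
    rw [Nat.mul_div_cancel _ hk]
  have h3 : (2 * k + k - 1) / k = 2 := by
    apply Nat.div_eq_of_lt_le <;> omega
  rcases hcount c ⟨Sum.inl 0, hcmem⟩ with h4 | h4 <;> rw [heta] at h4 <;> omega
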